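/- Let r ∈ ℝ with 0 < r < 1. For every nonzero z ∈ ℂ the following are equivalent: (i) there exists a nonzero λ ∈ ℂ with |λ| = 1 and r(λ + λ⁻¹) = z + z⁻¹; (ii) |z| = 1 and |Re z| ≤ r. -/

import Mathlib

open Complex

theorem stmt_1 (r : ℝ) (hr0 : 0 < r) (hr1 : r < 1) :
    ∀ z : ℂ, z ≠ 0 →
      ((∃ l : ℂ, l ≠ 0 ∧ ‖l‖ = 1 ∧ (r : ℂ) * (l + l⁻¹) = z + z⁻¹) ↔
        (‖z‖ = 1 ∧ |z.re| ≤ r)) := by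
  intro z hz
  set a := z.re with ha
  set b := z.im with hb
  constructor
  · rintro ⟨l, hl0, hl1, heq⟩
    rw [Complex.inv_eq_conj hl1, Complex.add_conj] at heq
    set w : ℝ := 2 * l.re with hwdef
    have hre : |l.re| ≤ 1 := by
      have := Complex.abs_re_le_norm l
      rwa [hl1] at this
    have hwb : |r * w| ≤ 2 * r := by
      rw [abs_mul, abs_of_pos hr0, hwdef, abs_mul, _root_.abs_two]
      nlinarith
    have heq2 : z * z + 1 = ((r * w : ℝ) : ℂ) * z := by
      have h := congrArg (· * z) heq
      field_simp at h
      push_cast at h ⊢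
      linear_combination -h
    have h1 : a * a - b * b + 1 = r * w * a := by
      have := congrArg Complex.re heq2
      simpa [Complex.add_re, Complex.mul_re, Complex.ofReal_re, Complex.ofReal_im] using this
    have h2 : (a * b + b * a) = r * w * b := by
      have := congrArg Complex.im heq2
      simpa [Complex.add_im, Complex.mul_im, Complex.ofReal_re, Complex.ofReal_im] using this
    have habw := abs_le.mp hwb
    by_cases hbz : b = 0
    · exfalso
      have haz : a ≠ 0 := by
        intro h0
        exact hz (Complex.ext (by simpa using h0) (by simpa using hbz))
      rw [hbz] at h1
      rcases lt_trichotomy a 0 with h | h | h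
      · nlinarith [sq_nonneg (a + 1)]
      · exact haz h
      · nlinarith [sq_nonneg (a - 1)]
    · have hw2a : r * w = 2 * a := by
        have : b * (r * w - 2 * a) = 0 := by linear_combination -h2
        rcases mul_eq_zero.mp this with h | h
        · exact absurd h hbz
        · linarith
      have hsum : a * a + b * b = 1 := by nlinarith [h1, hw2a]
      constructor
      · rw [Complex.norm_def, Complex.normSq_apply, ← ha, ← hb, hsum, Real.sqrt_one]
      · rw [abs_le]
        constructor <;> linarith [habw.1, habw.2, hw2a]
  · rintro ⟨habs, harea⟩
    set c : ℝ := a / r with hc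
    have hc1 : c ^ 2 ≤ 1 := by
      rw [hc, div_pow]
      rw [div_le_one (by positivity)]
      have : |a| ^ 2 ≤ r ^ 2 := by
        apply sq_le_sq' <;> nlinarith [abs_nonneg a, neg_abs_le a, le_abs_self a]
      simpa [_root_.sq_abs] using this
    set s : ℝ := Real.sqrt (1 - c ^ 2) with hs
    have hs2 : s ^ 2 = 1 - c ^ 2 := Real.sq_sqrt (by linarith)
    refine ⟨⟨c, s⟩, ?_, ?_, ?_⟩
    · intro h0
      have : c = 0 ∧ s = 0 := by
        constructor
        · exact congrArg Complex.re h0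
        · exact congrArg Complex.im h0
      nlinarith [this.1, this.2]
    · have : Complex.normSq ⟨c, s⟩ = 1 := by
        simp [Complex.normSq_apply]
        nlinarith
      rw [Complex.norm_def, this, Real.sqrt_one]
    · have hlabs : ‖(⟨c, s⟩ : ℂ)‖ = 1 := by
        have : Complex.normSq ⟨c, s⟩ = 1 := by
          simp [Complex.normSq_apply]
          nlinarith
        rw [Complex.norm_def, this, Real.sqrt_one]
      rw [Complex.inv_eq_conj hlabs, Complex.add_conj, Complex.inv_eq_conj habs,
        Complex.add_conj]
      have hlre : (⟨c, s⟩ : ℂ).re = c := rfl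
      rw [hlre]
      have : r * (2 * c) = 2 * a := by
        rw [hc]; field_simp
      have h3 := congrArg (Complex.ofReal) this
      push_cast at h3 ⊢
      exact h3
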